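/- Let K = ℚ(√69), ε = (25+3√69)/2, 𝔭 = (23, √69), and for each integer r ≥ 1 set R_r = −5 + (19/23)√69 + (5 − (15/23)√69)/(ε^{r+1} + 1) ∈ K. Then v_𝔭(R_r − 2) ≥ 1 if and only if r ≡ 10 (mod 23), and in that case one even has v_𝔭(R_r − 2) ≥ 2. -/

import Mathlib

open scoped Classical

open NumberField IsDedekindDomain

/-- The exponent `v_𝔭(α)` of the prime `v` in the factorization of the fractional
ideal `α·𝓞 K`, for `α ≠ 0`; by convention `adicVal v 0 = 0`. -/
noncomputable def adicVal {K : Type*} [Field K] [NumberField K]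
    (v : HeightOneSpectrum (𝓞 K)) (α : K) : ℤ :=
  if h : α = 0 then 0
  else -Multiplicative.toAdd (WithZero.unzero ((Valuation.ne_zero_iff (v.valuation K)).mpr h))

/-- The weighted norm `f_{𝔭,c}(α) = |N(α)| · (c/N𝔭)^{v_𝔭(α)}`, with `f_{𝔭,c}(0) = 0`. -/
noncomputable def weightedNorm {K : Type*} [Field K] [NumberField K]
    (v : HeightOneSpectrum (𝓞 K)) (c : ℝ) (α : K) : ℝ :=
  if α = 0 then 0
  else |(Algebra.norm ℚ α : ℚ)| * (c / (Ideal.absNorm v.asIdeal : ℝ)) ^ (adicVal v α)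

/-- `f` is a Euclidean function on `𝓞 K`. -/
def IsEuclideanFunction {K : Type*} [Field K] [NumberField K] (f : K → ℝ) : Prop :=
  ∀ a b : 𝓞 K, b ≠ 0 → ∃ q : 𝓞 K, f ((a : K) - b * q) < f (b : K)

/-- The point \`R_r = −5 + (19/23)√69 + (5 − (15/23)√69)/(ε^{r+1} + 1) ∈ K\`,
where \`ε = (25+3√69)/2\`. -/
noncomputable def Rpt {K : Type*} [Field K] (θ : K) (r : ℕ) : K :=
  -5 + (19 / 23) * θ + (5 - (15 / 23) * θ) / (((25 + 3 * θ) / 2) ^ (r + 1) + 1)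

theorem binom4 {R : Type*} [CommRing R] (p : R) (s : ℕ) :
    ∃ z : R, (1+p)^s = 1 + s*p + (s.choose 2)*p^2 + (s.choose 3)*p^3 + p^4*z := by
  induction s with
  | zero => exact ⟨0, by simp⟩
  | succ n ih =>
    obtain ⟨z, hz⟩ := ih
    refine ⟨(n.choose 3 : R) + z*(1+p), ?_⟩
    rw [pow_succ, hz]
    push_cast [Nat.choose_succ_succ, Nat.choose_one_right]
    ring

/-- For `K = ℚ(√69)`, `𝔭 = (23, √69)` and `r ≥ 1`:  the numerator of `R_r − 2` is
divisible by `𝔭` if and only if `r ≡ 10 (mod 23)`, and in that case it is even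
divisible by `𝔭²`. -/
theorem Rr_divisibility_sqrt69 {K : Type*} [Field K] [NumberField K]
    (θ : K) (hθ : θ ^ 2 = 69) (hdeg : Module.finrank ℚ K = 2)
    (ω : 𝓞 K) (hω : (ω : K) = θ)
    (hP : (Ideal.span {23, ω} : Ideal (𝓞 K)).IsPrime)
    (h0 : (Ideal.span {23, ω} : Ideal (𝓞 K)) ≠ ⊥)
    (r : ℕ) (hr : 1 ≤ r) :
    (1 ≤ adicVal ⟨Ideal.span {23, ω}, hP, h0⟩ (Rpt θ r - 2) ↔ r % 23 = 10) ∧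
    (r % 23 = 10 → 2 ≤ adicVal ⟨Ideal.span {23, ω}, hP, h0⟩ (Rpt θ r - 2)) := by
  classical
  -- ## Part 1 : algebraic setup in 𝓞 K
  have hwint : (1+θ)/2 ∈ integralClosure ℤ K := by
    refine ⟨Polynomial.X^2 - (Polynomial.X + Polynomial.C 17), ?_, ?_⟩
    · refine Polynomial.monic_X_pow_sub ?_
      refine lt_of_le_of_lt (Polynomial.degree_add_le _ _) ?_
      rw [Polynomial.degree_X, Polynomial.degree_C (by norm_num)]
      norm_num
    · simp only [Polynomial.eval₂_sub, Polynomial.eval₂_add, Polynomial.eval₂_pow,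
        Polynomial.eval₂_X, Polynomial.eval₂_C, Polynomial.eval₂_ofNat, map_ofNat]
      linear_combination hθ / 4
  set w : 𝓞 K := ⟨(1+θ)/2, hwint⟩ with hwdef
  have hwcoe : (w : K) = (1+θ)/2 := rfl
  have hw2 : w^2 = w + 17 := by
    ext; push_cast [hwcoe, map_ofNat]; linear_combination hθ / 4
  have hωw : ω = 2*w - 1 := by
    ext; push_cast [hwcoe, map_ofNat, hω]; ring
  set π : 𝓞 K := 10 + 3*w with hπdef
  set e : 𝓞 K := 11 + 3*w with hedef
  set u : 𝓞 K := 14 - 3*w with hudef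
  have hπ2 : π^2 = 23*π + 23 := by rw [hπdef]; linear_combination 9*hw2
  have he1 : e = 1 + π := by rw [hedef, hπdef]; ring
  have hu1 : u*(1+π) = 1 := by rw [hudef, hπdef]; linear_combination -9*hw2
  have h23 : (23 : 𝓞 K) = π^2*u := by linear_combination (-u)*hπ2 - 23*hu1
  have h3ω : 3*ω = 2*π - 23 := by rw [hωw, hπdef]; ring
  have hπω : π*(5-w) = ω := by rw [hωw, hπdef]; linear_combination -3*hw2
  have hπmem : π ∈ Ideal.span {(23:𝓞 K), ω} :=
    Ideal.mem_span_pair.mpr ⟨-1, w+1, by rw [hωw, hπdef]; linear_combination 2*hw2⟩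
  have h23ne : (23 : 𝓞 K) ≠ 0 := by
    have : ((23:ℕ) : 𝓞 K) ≠ 0 := Nat.cast_ne_zero.mpr (by norm_num)
    simpa using this
  have hπ23 : π ∣ 23 := ⟨π*u, by linear_combination h23⟩
  have hπ0 : π ≠ 0 := by
    intro h
    apply h23ne
    rw [h23, h]
    ring
  have hπnu : ¬ IsUnit π := by
    intro h
    exact hP.ne_top (Ideal.eq_top_of_isUnit_mem _ hπmem h)
  have L1 : ∀ m : ℤ, π ∣ (m : 𝓞 K) → (23:ℤ) ∣ m := by
    intro m hm
    by_contra hnd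
    have hnd' : ¬ (23:ℕ) ∣ m.natAbs := fun h => hnd (Int.natCast_dvd.mpr h)
    have hg : Int.gcd 23 m = 1 := by
      have := (Nat.Prime.coprime_iff_not_dvd (by norm_num)).mpr hnd'
      simpa [Int.gcd] using this
    obtain ⟨a, b, hab⟩ := Int.isCoprime_iff_gcd_eq_one.mpr hg
    have h1 : π ∣ (1 : 𝓞 K) := by
      have : ((a*23 + b*m : ℤ) : 𝓞 K) = 1 := by rw [hab]; push_cast; ring
      rw [← this]
      push_cast
      exact dvd_add (Dvd.dvd.mul_left hπ23 _) (Dvd.dvd.mul_left hm _)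
    exact hπnu (isUnit_of_dvd_one h1)
  -- E and A
  set E : 𝓞 K := e^(r+1) with hEdef
  obtain ⟨z, hz⟩ := binom4 π (r+1)
  set sN : 𝓞 K := ((r+1 : ℕ) : 𝓞 K) with hsNdef
  set b2 : 𝓞 K := (((r+1).choose 2 : ℕ) : 𝓞 K) with hb2def
  set b3 : 𝓞 K := (((r+1).choose 3 : ℕ) : 𝓞 K) with hb3def
  have hE0 : E = 1 + sN*π + b2*π^2 + b3*π^3 + π^4*z := by
    rw [hEdef, he1]; exact hz
  set P : 𝓞 K := 1 + 23*b2 + 529*b3 + 12696*z with hPdef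
  set Q : 𝓞 K := sN + 23*b2 + 552*b3 + 13225*z with hQdef
  have hE : E = P + Q*π := by
    rw [hPdef, hQdef]
    linear_combination hE0 + (b2 + b3*(π+23) + z*(π^2+23*π+552))*hπ2
  set A : 𝓞 K := (-161+19*ω)*E - 46 + 4*ω with hAdef
  set B : 𝓞 K := 23*(E+1) with hBdef
  have hA1 : 3*A = (-920+38*π)*E - 230 + 8*π := by
    rw [hAdef]; linear_combination (19*E+4)*h3ω
  set X : 𝓞 K := 2 - 2*sN + 15*b2 with hXdef
  set D : 𝓞 K := (sN - 2 - 2*b2 - 8*b3 - 230*z) + (-b2 - 10*b3 - 238*z)*π with hDdef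
  have hA2 : 3*A = 23*(15*sN - 4) + 23*X*π + 529*D := by
    rw [hXdef, hDdef]
    linear_combination hA1 + (-920+38*π)*hE + 38*Q*hπ2
  have hEm1 : π ∣ E - 1 := ⟨sN + b2*π + b3*π^2 + π^3*z, by linear_combination hE0⟩
  have hEp1notdvd : ¬ π ∣ (E + 1) := by
    intro hd
    have h2 : π ∣ 2 := by
      have : (E+1) - (E-1) = 2 := by ring
      exact this ▸ dvd_sub hd hEm1
    have : π ∣ (1:𝓞 K) := by
      have h1 : (23 : 𝓞 K) - 11*2 = 1 := by norm_num
      exact h1 ▸ dvd_sub hπ23 (h2.mul_left 11)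
    exact hπnu (isUnit_of_dvd_one this)
  have hEp1ne : E + 1 ≠ 0 := fun h => hEp1notdvd (h ▸ dvd_zero π)
  have hBne : B ≠ 0 := by
    rw [hBdef]
    exact mul_ne_zero h23ne hEp1ne
  have hb2n : 2 * ((r+1).choose 2) = (r+1)*r := by
    rw [Nat.choose_two_right, Nat.add_sub_cancel]
    refine Nat.mul_div_cancel' ?_
    have := Nat.even_mul_succ_self r
    rw [mul_comm] at this
    exact this.two_dvd
  have hb2K : 2*b2 = sN * (r : 𝓞 K) := by
    rw [hb2def, hsNdef]
    exact_mod_cast congrArg (fun n : ℕ => (n : 𝓞 K)) hb2n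
  have case10 : r % 23 = 10 → (529 : 𝓞 K) ∣ A := by
    intro h10
    obtain ⟨m, hm⟩ : ∃ m, r = 23*m + 10 := ⟨r/23, by omega⟩
    have d1 : 15*sN - 4 = 23*(15*(m:𝓞 K)+7) := by
      rw [hsNdef]; push_cast [hm]; ring
    have hsNm : sN = 23*(m:𝓞 K) + 11 := by rw [hsNdef]; push_cast [hm]; ring
    have hrm : ((r:ℕ) : 𝓞 K) = 23*(m:𝓞 K) + 10 := by push_cast [hm]; ring
    have hb2m : 2*b2 = (23*(m:𝓞 K)+11)*(23*(m:𝓞 K)+10) := by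
      rw [hb2K, hsNm, hrm]
    have h2X : 2*X = 23*(345*(m:𝓞 K)^2 + 311*m + 70) := by
      rw [hXdef]
      linear_combination 15*hb2m - 4*hsNm
    have d2 : X = 23*(12*(345*(m:𝓞 K)^2 + 311*m + 70) - X) := by
      linear_combination 12*h2X
    have h3A : (529:𝓞 K) ∣ 3*A := by
      refine ⟨(15*(m:𝓞 K)+7) + (12*(345*(m:𝓞 K)^2 + 311*m + 70) - X)*π + D, ?_⟩
      linear_combination hA2 + 23*d1 + 23*π*d2
    obtain ⟨c, hc⟩ := h3A
    exact ⟨353*c - 2*A, by linear_combination 353*hc⟩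
  have case_conv : π^3 ∣ A → r % 23 = 10 := by
    intro hd
    have heq : π^2*(u*(15*sN-4)) = 3*A - π^3*(u*X) - π^3*(π*u^2*D) := by
      linear_combination -hA2 + (-(15*sN-4) - X*π - D*(23 + π^2*u))*h23
    have hd3 : π^3 ∣ π^2*(u*(15*sN-4)) := by
      rw [heq]
      exact dvd_sub (dvd_sub (hd.mul_left 3) (Dvd.intro _ rfl)) (Dvd.intro _ rfl)
    obtain ⟨c, hc⟩ := hd3
    have hcc : u*(15*sN-4) = π*c := by
      have : π^2*(u*(15*sN-4)) = π^2*(π*c) := by rw [hc]; ring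
      exact mul_left_cancel₀ (pow_ne_zero 2 hπ0) this
    have hdvd : π ∣ 15*sN - 4 := by
      refine ⟨c*(1+π), ?_⟩
      calc 15*sN - 4 = (u*(1+π))*(15*sN-4) := by rw [hu1]; ring
      _ = (u*(15*sN-4))*(1+π) := by ring
      _ = π*(c*(1+π)) := by rw [hcc]; ring
    have hint : π ∣ ((15*(r+1) - 4 : ℤ) : 𝓞 K) := by
      have : ((15*(r+1) - 4 : ℤ) : 𝓞 K) = 15*sN - 4 := by
        rw [hsNdef]; push_cast; ring
      rw [this]; exact hdvd
    have := L1 _ hint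
    omega
  -- ## Part 2 : A ≠ 0
  have hω2 : ω^2 = 69 := by
    ext; push_cast [hω, map_ofNat]; exact hθ
  have hAne : A ≠ 0 := by
    intro h0A
    rw [hAdef] at h0A
    have h2 : (46:𝓞 K)*(22*E + 47 + 5*ω) = 0 := by
      linear_combination (-161-19*ω)*h0A + (361*E+76)*hω2
    have h3 : 22*E + 47 + 5*ω = 0 :=
      (mul_eq_zero.mp h2).resolve_left (by norm_num)
    have h4 : (4:𝓞 K)*(121*E^2 + 517*E + 121) = 0 := by
      linear_combination (22*E - 47 - 5*ω + 94)*h3 + 25*hω2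
    have h5 : 121*E^2 + 517*E + 121 = 0 :=
      (mul_eq_zero.mp h4).resolve_left (by norm_num)
    have h25u : (25 : 𝓞 K) - e = u := by rw [hedef, hudef]; ring
    have hee : e*(25-e) = 1 := by rw [h25u, he1, mul_comm]; exact hu1
    set E' : 𝓞 K := (25-e)^(r+1) with hE'def
    have hEE' : E * E' = 1 := by
      rw [hEdef, hE'def, ← mul_pow, hee, one_pow]
    have h7 : E'*(121*E^2 + 517*E + 121) = 0 := by rw [h5, mul_zero]
    have h6 : 121*E + 517 + 121*E' = 0 := by
      linear_combination h7 - (121*E + 517)*hEE'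
    have h8 : (11:𝓞 K)*(11*E + 47 + 11*E') = 0 := by linear_combination h6
    have h9 : 11*E + 47 + 11*E' = 0 :=
      (mul_eq_zero.mp h8).resolve_left (by norm_num)
    have h10 : (11:𝓞 K)*(E + E') = -47 := by linear_combination h9
    have h12 : ((E + E' : 𝓞 K) : K) = algebraMap ℚ K (-47/11) := by
      rw [map_div₀, map_neg, map_ofNat, map_ofNat, eq_div_iff (by norm_num : (11:K) ≠ 0)]
      have h := congrArg (fun x : 𝓞 K => (x : K)) h10
      push_cast [map_ofNat] at h ⊢
      linear_combination h
    have hint : IsIntegral ℤ (algebraMap ℚ K (-47/11)) :=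
      h12 ▸ RingOfIntegers.isIntegral_coe (E+E')
    have hint2 : IsIntegral ℤ ((-47/11 : ℚ)) :=
      (isIntegral_algebraMap_iff (algebraMap ℚ K).injective).mp hint
    obtain ⟨y, hy⟩ := IsIntegrallyClosed.isIntegral_iff.mp hint2
    have hy' : (y:ℚ) = -47/11 := by rw [← hy]; simp
    have : (11:ℚ)*y = -47 := by rw [hy']; ring
    have : (11:ℤ)*y = -47 := by exact_mod_cast this
    omega
  -- ## Part 3 : K-level identity
  have hce : (e : K) = (25+3*θ)/2 := by
    rw [hedef]; push_cast [hwcoe, map_ofNat]; ring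
  have hEK : ((E : 𝓞 K) : K) = ((25+3*θ)/2)^(r+1) := by
    rw [hEdef]; push_cast [hce]; ring
  have hden0 : ((25+3*θ)/2)^(r+1) + 1 ≠ 0 := by
    rw [← hEK]
    intro h
    apply hEp1ne
    apply RingOfIntegers.coe_injective
    push_cast
    exact h
  have hAK : (A : K) = (-161+19*θ)*(((25+3*θ)/2)^(r+1)) - 46 + 4*θ := by
    rw [hAdef]; push_cast [hω, map_ofNat, hEK]; ring
  have hBK : (B : K) = 23*(((25+3*θ)/2)^(r+1) + 1) := by
    rw [hBdef]; push_cast [map_ofNat, hEK]; ring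
  have hβeq : Rpt θ r - 2 = (A : K) / (B : K) := by
    rw [Rpt, hAK, hBK]
    set T : K := ((25+3*θ)/2)^(r+1) with hTdef
    field_simp [hden0]
    ring
  have hβne : Rpt θ r - 2 ≠ 0 := by
    rw [hβeq]
    exact div_ne_zero (RingOfIntegers.coe_ne_zero_iff.mpr hAne)
      (RingOfIntegers.coe_ne_zero_iff.mpr hBne)
  -- ## Part 4 : valuation computations
  set v : HeightOneSpectrum (𝓞 K) := ⟨Ideal.span {23, ω}, hP, h0⟩ with hvdef
  have hspan : v.asIdeal = Ideal.span {π} := by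
    show Ideal.span {(23:𝓞 K), ω} = Ideal.span {π}
    apply le_antisymm
    · rw [Ideal.span_le]
      rintro x (rfl | rfl)
      · exact Ideal.mem_span_singleton.mpr hπ23
      · exact Ideal.mem_span_singleton.mpr ⟨5-w, hπω.symm⟩
    · rw [Ideal.span_le, Set.singleton_subset_iff]
      exact hπmem
  have hfA : ∀ x : 𝓞 K, v.valuation K (x : K) = v.intValuation x := fun x => by
    rw [RingOfIntegers.coe_eq_algebraMap, HeightOneSpectrum.valuation_of_algebraMap]
  have hdvd_iff : ∀ (x : 𝓞 K) (n : ℕ),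
      (v.intValuation x ≤ Multiplicative.ofAdd (-(n:ℤ))) ↔ π^n ∣ x := by
    intro x n
    rw [← WithZero.exp_eq_coe_ofAdd, HeightOneSpectrum.intValuation_le_pow_iff_dvd,
      hspan, Ideal.span_singleton_pow, Ideal.dvd_span_singleton, Ideal.mem_span_singleton]
  have hone : ∀ x : 𝓞 K, ¬ π ∣ x → v.intValuation x = 1 := by
    intro x hx
    have hle : v.intValuation x ≤ 1 := by
      rw [HeightOneSpectrum.intValuation_apply]; exact v.intValuation_le_one x
    rcases lt_or_eq_of_le hle with hlt | heq
    · exfalso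
      apply hx
      have := (v.intValuation_lt_one_iff_dvd x).mp
        (by exact hlt)
      rw [hspan, Ideal.dvd_span_singleton, Ideal.mem_span_singleton] at this
      exact this
    · exact heq
  have hfne : ∀ x : 𝓞 K, x ≠ 0 → v.intValuation x ≠ 0 := by
    intro x hx
    rw [HeightOneSpectrum.intValuation_apply]
    exact v.intValuation_ne_zero x hx
  have hπu : ¬ π ∣ u := by
    intro hd
    have : π ∣ (1:𝓞 K) := hu1 ▸ hd.mul_right (1+π)
    exact hπnu (isUnit_of_dvd_one this)
  have hBval : v.intValuation B = v.intValuation π ^ 2 := by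
    have h1 : B = π^2 * (u * (E+1)) := by rw [hBdef, h23]; ring
    rw [h1, map_mul, map_pow, map_mul, hone u hπu, hone (E+1) hEp1notdvd, mul_one, mul_one]
  have hvalβ : v.valuation K (Rpt θ r - 2) = v.intValuation A / v.intValuation B := by
    rw [hβeq, map_div₀, hfA, hfA]
  have hπle1 : v.intValuation π ≤ Multiplicative.ofAdd (-(1:ℤ)) := by
    have := (hdvd_iff π 1).mpr (by simpa using dvd_refl π)
    simpa using this
  have hπnle2 : ¬ (v.intValuation π ≤ Multiplicative.ofAdd (-(2:ℤ))) := by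
    intro h
    have h2 : π^2 ∣ π := by
      have := (hdvd_iff π 2).mp (by simpa using h)
      exact this
    obtain ⟨c, hc⟩ := h2
    have h1 : π * 1 = π * (π * c) := by linear_combination hc
    exact hπnu (isUnit_of_dvd_one ⟨c, mul_left_cancel₀ hπ0 h1⟩)
  -- value of adicVal conversions
  have hadic1 : ∀ (x : K) (hx : x ≠ 0) (n : ℤ),
      v.valuation K x ≤ (Multiplicative.ofAdd (-n) : Multiplicative ℤ) → n ≤ adicVal v x := by
    intro x hx n h
    rw [adicVal, dif_neg hx]
    rw [← WithZero.coe_unzero ((Valuation.ne_zero_iff (v.valuation K)).mpr hx),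
      WithZero.coe_le_coe] at h
    have := Multiplicative.toAdd_le.mpr h
    simp only [toAdd_ofAdd] at this
    omega
  have hadic2 : ∀ (x : K) (hx : x ≠ 0) (n : ℤ),
      n ≤ adicVal v x → v.valuation K x ≤ (Multiplicative.ofAdd (-n) : Multiplicative ℤ) := by
    intro x hx n h
    rw [adicVal, dif_neg hx] at h
    rw [← WithZero.coe_unzero ((Valuation.ne_zero_iff (v.valuation K)).mpr hx),
      WithZero.coe_le_coe]
    rw [← Multiplicative.toAdd_le]
    simp only [toAdd_ofAdd]
    omega
  -- main case 10
  have main10 : r % 23 = 10 → 2 ≤ adicVal v (Rpt θ r - 2) := by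
    intro h10
    have h529 : (529:𝓞 K) = π^4*u^2 := by linear_combination (23 + π^2*u)*h23
    have hA4 : π^4 ∣ A := dvd_trans ⟨u^2, h529⟩ (case10 h10)
    have hπ2le : v.intValuation π ^ 2 ≤ (Multiplicative.ofAdd (-(2:ℤ)) : Multiplicative ℤ) := by
      calc v.intValuation π ^ 2
          ≤ ((Multiplicative.ofAdd (-(1:ℤ)) : Multiplicative ℤ) : WithZero (Multiplicative ℤ)) ^ 2 :=
            pow_le_pow_left' hπle1 2
        _ = ((Multiplicative.ofAdd (-(2:ℤ)) : Multiplicative ℤ) : WithZero (Multiplicative ℤ)) := by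
            rw [← WithZero.coe_pow]
            norm_num
            rfl
    apply hadic1 _ hβne
    rw [hvalβ, hBval, div_le_iff₀ (zero_lt_iff.mpr (pow_ne_zero 2 (hfne π hπ0)))]
    obtain ⟨c, hc⟩ := hA4
    rw [hc, map_mul, map_pow]
    calc v.intValuation π^4 * v.intValuation c
        ≤ v.intValuation π^4 * 1 := by
          refine mul_le_mul_right ?_ _
          rw [HeightOneSpectrum.intValuation_apply]
          exact v.intValuation_le_one c
      _ = v.intValuation π^2 * v.intValuation π^2 := by
          rw [mul_one, ← pow_add]
      _ ≤ (Multiplicative.ofAdd (-(2:ℤ)) : Multiplicative ℤ) * v.intValuation π^2 :=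
          mul_le_mul_left hπ2le _
  -- main converse
  have mainconv : 1 ≤ adicVal v (Rpt θ r - 2) → r % 23 = 10 := by
    intro h1le
    have hv1 := hadic2 _ hβne 1 h1le
    have hfπ : v.intValuation π = (Multiplicative.ofAdd (-(1:ℤ)) : Multiplicative ℤ) := by
      obtain ⟨a, ha⟩ := WithZero.ne_zero_iff_exists.mp (hfne π hπ0)
      rw [← ha] at hπle1 hπnle2 ⊢
      rw [WithZero.coe_le_coe] at hπle1
      rw [WithZero.coe_le_coe] at hπnle2
      rw [WithZero.coe_inj]
      have h1 : Multiplicative.toAdd a ≤ -1 := by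
        rw [← Multiplicative.toAdd_le] at hπle1
        simpa using hπle1
      have h2 : ¬ (Multiplicative.toAdd a ≤ -2) := by
        intro h
        exact hπnle2 (by rw [← Multiplicative.toAdd_le]; simpa using h)
      have : Multiplicative.toAdd a = -1 := by omega
      rw [← ofAdd_toAdd a, this]
    have hA3 : v.intValuation A ≤ Multiplicative.ofAdd (-(3:ℤ)) := by
      rw [hvalβ, hBval, div_le_iff₀ (zero_lt_iff.mpr (pow_ne_zero 2 (hfne π hπ0)))] at hv1
      calc v.intValuation A
          ≤ (Multiplicative.ofAdd (-(1:ℤ)) : Multiplicative ℤ) * v.intValuation π^2 := hv1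
        _ = Multiplicative.ofAdd (-(3:ℤ)) := by
            rw [hfπ, ← WithZero.coe_pow, ← WithZero.coe_mul, WithZero.coe_inj]
            rfl
    have := (hdvd_iff A 3).mp (by simpa using hA3)
    exact case_conv this
  refine ⟨⟨mainconv, fun h10 => le_trans (by norm_num) (main10 h10)⟩, main10⟩
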